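/- Let k ≥ 2 and l be integers with 2 ≤ l < k, let a ∈ ℝ and a₂ ∈ ℝ, a₂ ≠ 0. Suppose D₁, D₂, R : (0,δ) → (0,∞) satisfy, as s → 0⁺: D₂(s) = s²/2 + (a/2^k) s^{2k}(−log s) + o(s^{2k}(−log s)); D₁(s) = √2 s^{1/2} + (a/(2√2)) s^{k−1/2}(−log s) + o(s^{k−1/2}(−log s)); and R(s) = s + a₂ s^l + o(s^l). Then the composition P = D₁ ∘ R ∘ D₂ satisfies s − P(s) = −a₂ 2^{−l} s^{2l−1} + o(s^{2l−1}); in particular s − P(s) ∼ s^{2l−1}. (This is the asymptotics of the Poincaré map on a transversal through the saddle vertex for a saddle loop of even codimension 2l: for even codimension k' = 2l one gets s − P(s) ∼ s^{k'−1}.) -/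

import Mathlib

open Filter Real Set

lemma aux_pow_neglog (n : ℕ) (hn : 1 ≤ n) :
    Tendsto (fun s : ℝ => s ^ n * (-Real.log s)) (nhdsWithin 0 (Set.Ioi 0)) (nhds 0) := by
  have h := (tendsto_log_mul_rpow_nhdsGT_zero (r := (n:ℝ)) (by exact_mod_cast hn)).neg
  rw [neg_zero] at h
  refine h.congr fun s => ?_
  rw [Real.rpow_natCast]; ring

lemma aux_pow_zero (n : ℕ) (hn : 1 ≤ n) :
    Tendsto (fun s : ℝ => s ^ n) (nhdsWithin (0:ℝ) (Set.Ioi 0)) (nhds 0) := by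
  have h : Tendsto (fun s : ℝ => s ^ n) (nhds 0) (nhds ((0:ℝ) ^ n)) :=
    (continuous_pow n).tendsto (0:ℝ)
  rw [zero_pow (by omega : n ≠ 0)] at h
  exact h.mono_left nhdsWithin_le_nhds

set_option maxHeartbeats 1000000 in
/-- Asymptotics of the Poincaré map on a transversal through the saddle vertex
for a saddle loop of even codimension `2l` (`2 ≤ l < k`, `a₂ ≠ 0`).
With `D₂(s) = s²/2 + (a/2^k) s^{2k}(−log s) + o(s^{2k}(−log s))`,
`D₁(s) = √2 s^{1/2} + (a/(2√2)) s^{k−1/2}(−log s) + o(s^{k−1/2}(−log s))`, and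
`R(s) = s + a₂ s^l + o(s^l)`, the composition `P = D₁ ∘ R ∘ D₂` satisfies
`s − P(s) = −a₂ 2^{−l} s^{2l−1} + o(s^{2l−1})`; in particular `s − P(s) ∼ s^{2l−1}`. -/
theorem poincare_through_vertex_even_codim
    (k l : ℕ) (hl : 2 ≤ l) (hlk : l < k) (a a₂ : ℝ) (ha₂ : a₂ ≠ 0)
    (δ : ℝ) (hδ : 0 < δ) (D₁ D₂ R : ℝ → ℝ)
    (hD₁pos : ∀ s ∈ Set.Ioo (0:ℝ) δ, 0 < D₁ s)
    (hD₂pos : ∀ s ∈ Set.Ioo (0:ℝ) δ, 0 < D₂ s)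
    (hRpos : ∀ s ∈ Set.Ioo (0:ℝ) δ, 0 < R s)
    (hD₂ : Tendsto
      (fun s : ℝ => (D₂ s - s ^ 2 / 2 - (a / 2 ^ k) * s ^ (2 * k) * (-Real.log s)) /
        (s ^ (2 * k) * (-Real.log s)))
      (nhdsWithin 0 (Set.Ioi 0)) (nhds 0))
    (hD₁ : Tendsto
      (fun s : ℝ => (D₁ s - Real.sqrt 2 * s ^ ((1:ℝ)/2)
          - (a / (2 * Real.sqrt 2)) * s ^ ((k:ℝ) - 1/2) * (-Real.log s)) /
        (s ^ ((k:ℝ) - 1/2) * (-Real.log s)))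
      (nhdsWithin 0 (Set.Ioi 0)) (nhds 0))
    (hR : Tendsto (fun s : ℝ => (R s - s - a₂ * s ^ l) / s ^ l)
      (nhdsWithin 0 (Set.Ioi 0)) (nhds 0)) :
    Tendsto
      (fun s : ℝ => (s - D₁ (R (D₂ s)) - (-a₂ * 2 ^ (-(l:ℝ)) * s ^ (2 * l - 1))) /
        s ^ (2 * l - 1))
      (nhdsWithin 0 (Set.Ioi 0)) (nhds 0) ∧
    (∃ L : ℝ, L ≠ 0 ∧ Tendsto (fun s : ℝ => (s - D₁ (R (D₂ s))) / s ^ (2 * l - 1))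
      (nhdsWithin 0 (Set.Ioi 0)) (nhds L)) := by
  set F := nhdsWithin (0:ℝ) (Set.Ioi 0) with hF
  set c₂ : ℝ := a / 2 ^ k with hc₂
  set c₁ : ℝ := a / (2 * Real.sqrt 2) with hc₁
  set c' : ℝ := ((1:ℝ)/2) ^ l with hc'
  have hc : (2:ℝ) ^ (-(l:ℝ)) = c' := by
    rw [Real.rpow_neg (by norm_num), Real.rpow_natCast, hc', one_div, inv_pow]
  -- basic eventual facts
  have hs0 : ∀ᶠ s in F, (0:ℝ) < s := eventually_mem_nhdsWithin
  have hsm : ∀ᶠ s in F, s < min δ 1 :=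
    (gt_mem_nhds (lt_min hδ one_pos)).filter_mono nhdsWithin_le_nhds
  have key1 : ∀ (A B u p q : ℝ), q ≠ 0 → u ≠ 0 → p ≠ 0 →
      (A - B * (p * q) * u) / (p * q * u) * (q * u) + B * (q * u) = A / p := by
    intro A B u p q hq hu hp
    field_simp
    ring
  have key2 : ∀ (A B c p u Y : ℝ), p ≠ 0 → u ≠ 0 → Y ≠ 0 →
      (A - B - c * p * u) / (p * u) * (p * u / Y) + c * (p * u / Y) = (A - B) / Y := by
    intro A B c p u Y hp hu hY
    field_simp
    ring
  -- D₂ tends to 0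
  have hD₂0 : Tendsto D₂ F (nhds 0) := by
    have hX0 := aux_pow_neglog (2*k) (by omega)
    have h2 := aux_pow_zero 2 (by omega)
    have hlim : Tendsto (fun s : ℝ =>
        ((D₂ s - s ^ 2 / 2 - c₂ * s ^ (2 * k) * (-Real.log s)) /
          (s ^ (2 * k) * (-Real.log s))) * (s ^ (2 * k) * (-Real.log s))
        + s ^ 2 / 2 + c₂ * (s ^ (2 * k) * (-Real.log s)))
        F (nhds (0 * 0 + 0 / 2 + c₂ * 0)) :=
      ((hD₂.mul hX0).add (h2.div_const 2)).add (hX0.const_mul _)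
    rw [show (0 * 0 + 0 / 2 + c₂ * 0 : ℝ) = 0 by ring] at hlim
    refine hlim.congr' ?_
    filter_upwards [hs0, hsm] with s hs hm
    have hs1 : s < 1 := lt_of_lt_of_le hm (min_le_right _ _)
    have hlog : -Real.log s ≠ 0 := by
      have := Real.log_neg hs hs1; intro h; linarith [neg_eq_zero.mp h]
    have hXne : s ^ (2*k) * (-Real.log s) ≠ 0 := mul_ne_zero (pow_ne_zero _ hs.ne') hlog
    rw [div_mul_cancel₀ _ hXne]; ring
  have hD₂mem : ∀ᶠ s in F, D₂ s ∈ Set.Ioo (0:ℝ) δ := by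
    have h1 : ∀ᶠ s in F, D₂ s < δ := hD₂0.eventually (gt_mem_nhds hδ)
    filter_upwards [hs0, hsm, h1] with s h h2 h3
    exact ⟨hD₂pos s ⟨h, lt_of_lt_of_le h2 (min_le_left _ _)⟩, h3⟩
  have hD₂F : Tendsto D₂ F F := by
    refine tendsto_nhdsWithin_of_tendsto_nhds_of_eventually_within _ hD₂0 ?_
    filter_upwards [hD₂mem] with s hs using hs.1
  have hRD : Tendsto (fun s => (R (D₂ s) - D₂ s - a₂ * (D₂ s) ^ l) / (D₂ s) ^ l)
      F (nhds 0) := hR.comp hD₂F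
  have hvpos : ∀ᶠ s in F, 0 < R (D₂ s) := by
    filter_upwards [hD₂mem] with s hs using hRpos _ hs
  have hv0 : Tendsto (fun s => R (D₂ s)) F (nhds 0) := by
    have hD₂l : Tendsto (fun s => (D₂ s) ^ l) F (nhds 0) := by
      have := hD₂0.pow l; rwa [zero_pow (by omega : l ≠ 0)] at this
    have hlim : Tendsto (fun s =>
        ((R (D₂ s) - D₂ s - a₂ * (D₂ s) ^ l) / (D₂ s) ^ l) * (D₂ s) ^ l
        + D₂ s + a₂ * (D₂ s) ^ l) F (nhds (0 * 0 + 0 + a₂ * 0)) :=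
      ((hRD.mul hD₂l).add hD₂0).add (hD₂l.const_mul a₂)
    rw [show (0 * 0 + 0 + a₂ * 0 : ℝ) = 0 by ring] at hlim
    refine hlim.congr' ?_
    filter_upwards [hD₂mem] with s hs
    rw [div_mul_cancel₀ _ (pow_ne_zero _ hs.1.ne')]
    ring
  have hvF : Tendsto (fun s => R (D₂ s)) F F :=
    tendsto_nhdsWithin_of_tendsto_nhds_of_eventually_within _ hv0 hvpos
  have hvlt1 : ∀ᶠ s in F, R (D₂ s) < 1 := hv0.eventually (gt_mem_nhds one_pos)
  -- (D₂ s - s²/2)/s^{2l} → 0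
  have hq2 : Tendsto (fun s => (D₂ s - s ^ 2 / 2) / s ^ (2 * l)) F (nhds 0) := by
    have hY := aux_pow_neglog (2*(k-l)) (by omega)
    have hlim : Tendsto (fun s : ℝ =>
        ((D₂ s - s ^ 2 / 2 - c₂ * s ^ (2 * k) * (-Real.log s)) /
          (s ^ (2 * k) * (-Real.log s))) * (s ^ (2*(k-l)) * (-Real.log s))
        + c₂ * (s ^ (2*(k-l)) * (-Real.log s)))
        F (nhds (0 * 0 + c₂ * 0)) := (hD₂.mul hY).add (hY.const_mul _)
    rw [show (0 * 0 + c₂ * 0 : ℝ) = 0 by ring] at hlim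
    refine hlim.congr' ?_
    filter_upwards [hs0, hsm] with s hs hm
    have hs1 : s < 1 := lt_of_lt_of_le hm (min_le_right _ _)
    have hlog : (0:ℝ) < -Real.log s := by have := Real.log_neg hs hs1; linarith
    have hkey : s ^ (2*k) = s ^ (2*l) * s ^ (2*(k-l)) := by rw [← pow_add]; congr 1; omega
    have h2l : s ^ (2*l) ≠ 0 := pow_ne_zero _ hs.ne'
    have hm2 : s ^ (2*(k-l)) ≠ 0 := pow_ne_zero _ hs.ne'
    rw [hkey]
    exact key1 _ _ _ _ _ hm2 hlog.ne' h2l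
  -- D₂ s / s² → 1/2
  have ht : Tendsto (fun s => D₂ s / s ^ 2) F (nhds (1/2)) := by
    have hlim : Tendsto (fun s : ℝ => 1/2 + s ^ (2*l-2) * ((D₂ s - s ^ 2 / 2) / s ^ (2*l)))
        F (nhds (1/2 + 0 * 0)) :=
      tendsto_const_nhds.add ((aux_pow_zero (2*l-2) (by omega)).mul hq2)
    rw [show (1/2 + 0 * 0 : ℝ) = 1/2 by ring] at hlim
    refine hlim.congr' ?_
    filter_upwards [hs0] with s hs
    have hkey : s ^ (2*l) = s ^ 2 * s ^ (2*l-2) := by rw [← pow_add]; congr 1; omega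
    have h1 : s ^ (2*l-2) ≠ 0 := pow_ne_zero _ hs.ne'
    rw [hkey]
    field_simp
    ring
  -- relative error of v
  have hw : Tendsto
      (fun s => (R (D₂ s) - s ^ 2 / 2 - a₂ * c' * s ^ (2 * l)) / s ^ (2 * l))
      F (nhds 0) := by
    have htl : Tendsto (fun s => (D₂ s / s ^ 2) ^ l) F (nhds ((1/2:ℝ)^l)) := ht.pow l
    have hlim : Tendsto (fun s =>
        ((R (D₂ s) - D₂ s - a₂ * (D₂ s) ^ l) / (D₂ s) ^ l) * (D₂ s / s ^ 2) ^ l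
        + (D₂ s - s ^ 2 / 2) / s ^ (2*l)
        + a₂ * ((D₂ s / s ^ 2) ^ l - c'))
        F (nhds (0 * (1/2:ℝ)^l + 0 + a₂ * ((1/2:ℝ)^l - c'))) :=
      ((hRD.mul htl).add hq2).add ((htl.sub_const c').const_mul a₂)
    rw [show (0 * (1/2:ℝ)^l + 0 + a₂ * ((1/2:ℝ)^l - c')) = 0 by rw [hc']; ring] at hlim
    refine hlim.congr' ?_
    filter_upwards [hs0, hD₂mem] with s hs hD
    have hD0 : (D₂ s) ^ l ≠ 0 := pow_ne_zero _ hD.1.ne'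
    have hs2 : ((s:ℝ) ^ 2) ^ l ≠ 0 := pow_ne_zero _ (pow_ne_zero _ hs.ne')
    have hkey : s ^ (2*l) = (s ^ 2) ^ l := by rw [← pow_mul]
    rw [hkey, div_pow]
    field_simp
    ring
  -- v s / s² → 1/2
  have hr2 : Tendsto (fun s => R (D₂ s) / s ^ 2) F (nhds (1/2)) := by
    have hlim : Tendsto (fun s : ℝ => 1/2 + a₂ * c' * s ^ (2*l-2)
        + s ^ (2*l-2) * ((R (D₂ s) - s ^ 2 / 2 - a₂ * c' * s ^ (2*l)) / s ^ (2*l)))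
        F (nhds (1/2 + a₂ * c' * 0 + 0 * 0)) :=
      (tendsto_const_nhds.add ((aux_pow_zero (2*l-2) (by omega)).const_mul (a₂*c'))).add
        ((aux_pow_zero (2*l-2) (by omega)).mul hw)
    rw [show (1/2 + a₂ * c' * 0 + 0 * 0 : ℝ) = 1/2 by ring] at hlim
    refine hlim.congr' ?_
    filter_upwards [hs0] with s hs
    have hkey : s ^ (2*l) = s ^ 2 * s ^ (2*l-2) := by rw [← pow_add]; congr 1; omega
    have h1 : s ^ (2*l-2) ≠ 0 := pow_ne_zero _ hs.ne'
    rw [hkey]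
    field_simp
    ring
  -- s / (√2 √v + s) → 1/2
  have hsq : Tendsto (fun s => s / (Real.sqrt 2 * Real.sqrt (R (D₂ s)) + s))
      F (nhds (1/2)) := by
    have h2v : Tendsto (fun s => 2 * (R (D₂ s) / s ^ 2)) F (nhds 1) := by
      have := hr2.const_mul 2
      rwa [show (2 * (1/2) : ℝ) = 1 by ring] at this
    have hsq1 : Tendsto (fun s => Real.sqrt (2 * (R (D₂ s) / s ^ 2))) F (nhds 1) := by
      have h := (Real.continuous_sqrt.tendsto 1).comp h2v
      rw [Real.sqrt_one] at h
      exact h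
    have hden : Tendsto (fun s => Real.sqrt (2 * (R (D₂ s) / s ^ 2)) + 1) F (nhds 2) := by
      have := hsq1.add_const 1
      rwa [show ((1:ℝ) + 1) = 2 by ring] at this
    have hfin : Tendsto (fun s => 1 / (Real.sqrt (2 * (R (D₂ s) / s ^ 2)) + 1))
        F (nhds (1/2)) := tendsto_const_nhds.div hden (by norm_num)
    refine hfin.congr' ?_
    filter_upwards [hs0, hvpos] with s hs hv'
    have key : Real.sqrt 2 * Real.sqrt (R (D₂ s))
        = s * Real.sqrt (2 * (R (D₂ s) / s ^ 2)) := by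
      rw [← Real.sqrt_mul (by norm_num : (0:ℝ) ≤ 2),
        show s * Real.sqrt (2 * (R (D₂ s) / s ^ 2))
          = Real.sqrt (s ^ 2) * Real.sqrt (2 * (R (D₂ s) / s ^ 2)) by rw [Real.sqrt_sq hs.le],
        ← Real.sqrt_mul (sq_nonneg s)]
      congr 1
      field_simp
    rw [key, show s * Real.sqrt (2 * (R (D₂ s) / s ^ 2)) + s
      = s * (Real.sqrt (2 * (R (D₂ s) / s ^ 2)) + 1) by ring,
      div_mul_eq_div_div, div_self hs.ne']
  -- (2 v - s²)/s^{2l} → 2 a₂ c'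
  have hnum : Tendsto (fun s => (2 * R (D₂ s) - s ^ 2) / s ^ (2 * l))
      F (nhds (2 * (a₂ * c'))) := by
    have hlim : Tendsto (fun s =>
        2 * ((R (D₂ s) - s ^ 2 / 2 - a₂ * c' * s ^ (2*l)) / s ^ (2*l)) + 2 * (a₂ * c'))
        F (nhds (2 * 0 + 2 * (a₂ * c'))) := (hw.const_mul 2).add_const _
    rw [show (2 * (0:ℝ) + 2 * (a₂ * c')) = 2 * (a₂ * c') by ring] at hlim
    refine hlim.congr' ?_
    filter_upwards [hs0] with s hs
    have h1 : s ^ (2*l) ≠ 0 := pow_ne_zero _ hs.ne'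
    field_simp
    ring
  -- main square-root expansion
  have hmain1 : Tendsto
      (fun s => (Real.sqrt 2 * Real.sqrt (R (D₂ s)) - s) / s ^ (2 * l - 1))
      F (nhds (a₂ * c')) := by
    have hlim := hnum.mul hsq
    rw [show (2 * (a₂ * c') * (1/2:ℝ)) = a₂ * c' by ring] at hlim
    refine hlim.congr' ?_
    filter_upwards [hs0, hvpos] with s hs hv'
    have hx2 : (Real.sqrt 2 * Real.sqrt (R (D₂ s))) * (Real.sqrt 2 * Real.sqrt (R (D₂ s)))
        = 2 * R (D₂ s) := by
      rw [mul_mul_mul_comm, Real.mul_self_sqrt (by norm_num), Real.mul_self_sqrt hv'.le]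
    have hxpos : (0:ℝ) < Real.sqrt 2 * Real.sqrt (R (D₂ s)) + s := by positivity
    have hxs : Real.sqrt 2 * Real.sqrt (R (D₂ s)) - s
        = (2 * R (D₂ s) - s ^ 2) / (Real.sqrt 2 * Real.sqrt (R (D₂ s)) + s) := by
      rw [eq_div_iff hxpos.ne']
      linear_combination hx2
    have hsl : s ^ (2*l-1) ≠ 0 := pow_ne_zero _ hs.ne'
    rw [hxs, show 2*l = (2*l-1)+1 by omega, pow_succ]
    field_simp
    rw [show 2 * l - 1 + 1 - 1 = 2 * l - 1 by omega]
    ring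
  -- remainder term of D₁ is negligible
  have hupper : Tendsto
      (fun s => (R (D₂ s)) ^ ((k:ℝ) - 1/2) * (-Real.log (R (D₂ s))) / s ^ (2 * l - 1))
      F (nhds 0) := by
    have hg : Tendsto (fun s : ℝ => s ^ (2*(k-l)) * (-(2:ℝ) * Real.log s + Real.log 4))
        F (nhds 0) := by
      have h1 := (aux_pow_neglog (2*(k-l)) (by omega)).const_mul 2
      have h2 := (aux_pow_zero (2*(k-l)) (by omega)).const_mul (Real.log 4)
      have h3 := h1.add h2
      rw [show (2 * 0 + Real.log 4 * 0 : ℝ) = 0 by ring] at h3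
      refine h3.congr fun s => ?_
      ring
    have hvle : ∀ᶠ s in F, R (D₂ s) ≤ s ^ 2 := by
      have h := hr2.eventually (gt_mem_nhds (by norm_num : (1:ℝ)/2 < 1))
      filter_upwards [hs0, h] with s hs h'
      have hs2 : (0:ℝ) < s ^ 2 := by positivity
      have h2 := mul_le_mul_of_nonneg_right h'.le hs2.le
      calc R (D₂ s) = (R (D₂ s) / s ^ 2) * s ^ 2 := by field_simp
        _ ≤ 1 * s ^ 2 := h2
        _ = s ^ 2 := one_mul _
    have hvge : ∀ᶠ s in F, s ^ 2 / 4 ≤ R (D₂ s) := by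
      have h := hr2.eventually (lt_mem_nhds (by norm_num : (1:ℝ)/4 < 1/2))
      filter_upwards [hs0, h] with s hs h'
      have hs2 : (0:ℝ) < s ^ 2 := by positivity
      have h2 := mul_le_mul_of_nonneg_right h'.le hs2.le
      calc s ^ 2 / 4 = (1/4) * s ^ 2 := by ring
        _ ≤ (R (D₂ s) / s ^ 2) * s ^ 2 := h2
        _ = R (D₂ s) := by field_simp
    refine squeeze_zero' ?_ ?_ hg
    · filter_upwards [hs0, hvpos, hvlt1] with s hs hv' h1
      have hnl : 0 ≤ -Real.log (R (D₂ s)) := by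
        have := Real.log_nonpos hv'.le h1.le; linarith
      exact div_nonneg (mul_nonneg (Real.rpow_nonneg hv'.le _) hnl) (pow_nonneg hs.le _)
    · filter_upwards [hs0, hvpos, hvlt1, hvle, hvge] with s hs hv' h1 h2 h3
      have hκ : (0:ℝ) ≤ (k:ℝ) - 1/2 := by
        have : (1:ℝ) ≤ (k:ℝ) := by exact_mod_cast (by omega : 1 ≤ k)
        linarith
      have hb1 : (R (D₂ s)) ^ ((k:ℝ) - 1/2) ≤ (s ^ 2) ^ ((k:ℝ) - 1/2) :=
        Real.rpow_le_rpow hv'.le h2 hκ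
      have hb1' : ((s:ℝ) ^ 2) ^ ((k:ℝ) - 1/2) = s ^ (2*k-1) := by
        have h2k : ((2*k-1 : ℕ):ℝ) = 2 * ((k:ℝ) - 1/2) := by
          rw [Nat.cast_sub (by omega : 1 ≤ 2*k)]; push_cast; ring
        rw [← Real.rpow_natCast s (2*k-1), h2k, Real.rpow_mul hs.le,
          show (2:ℝ) = ((2:ℕ):ℝ) by norm_num, Real.rpow_natCast]
      have hlogb : -Real.log (R (D₂ s)) ≤ -(2 * Real.log s) + Real.log 4 := by
        have h4 : Real.log (s ^ 2 / 4) ≤ Real.log (R (D₂ s)) :=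
          Real.log_le_log (by positivity) h3
        have h5 : Real.log (s ^ 2 / 4) = 2 * Real.log s - Real.log 4 := by
          rw [Real.log_div (by positivity) (by norm_num), Real.log_pow]
          push_cast; ring
        linarith
      have hnl : 0 ≤ -Real.log (R (D₂ s)) := by
        have := Real.log_nonpos hv'.le h1.le; linarith
      have hmul : (R (D₂ s)) ^ ((k:ℝ) - 1/2) * (-Real.log (R (D₂ s)))
          ≤ s ^ (2*k-1) * (-(2 * Real.log s) + Real.log 4) :=
        mul_le_mul (hb1.trans_eq hb1') hlogb hnl (by positivity)
      have hdiv := (div_le_div_iff_of_pos_right (by positivity : (0:ℝ) < s ^ (2*l-1))).mpr hmul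
      refine hdiv.trans_eq ?_
      have hsl : s ^ (2*l-1) ≠ 0 := pow_ne_zero _ hs.ne'
      rw [show 2*k-1 = (2*l-1)+(2*(k-l)) by omega, pow_add]
      field_simp
  have hD1term : Tendsto
      (fun s => (D₁ (R (D₂ s)) - Real.sqrt 2 * Real.sqrt (R (D₂ s))) / s ^ (2 * l - 1))
      F (nhds 0) := by
    have hD1err : Tendsto (fun s => (D₁ (R (D₂ s)) - Real.sqrt 2 * (R (D₂ s)) ^ ((1:ℝ)/2)
        - c₁ * (R (D₂ s)) ^ ((k:ℝ) - 1/2) * (-Real.log (R (D₂ s)))) /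
        ((R (D₂ s)) ^ ((k:ℝ) - 1/2) * (-Real.log (R (D₂ s))))) F (nhds 0) := hD₁.comp hvF
    have hlim : Tendsto (fun s =>
        ((D₁ (R (D₂ s)) - Real.sqrt 2 * (R (D₂ s)) ^ ((1:ℝ)/2)
          - c₁ * (R (D₂ s)) ^ ((k:ℝ) - 1/2) * (-Real.log (R (D₂ s)))) /
          ((R (D₂ s)) ^ ((k:ℝ) - 1/2) * (-Real.log (R (D₂ s)))))
        * ((R (D₂ s)) ^ ((k:ℝ) - 1/2) * (-Real.log (R (D₂ s))) / s ^ (2*l-1))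
        + c₁ * ((R (D₂ s)) ^ ((k:ℝ) - 1/2) * (-Real.log (R (D₂ s))) / s ^ (2*l-1)))
        F (nhds (0 * 0 + c₁ * 0)) :=
      (hD1err.mul hupper).add (hupper.const_mul _)
    rw [show (0 * 0 + c₁ * 0 : ℝ) = 0 by ring] at hlim
    refine hlim.congr' ?_
    filter_upwards [hs0, hvpos, hvlt1] with s hs hv' h1
    have hκpos : (0:ℝ) < (R (D₂ s)) ^ ((k:ℝ) - 1/2) := Real.rpow_pos_of_pos hv' _
    have hnl : (0:ℝ) < -Real.log (R (D₂ s)) := by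
      have := Real.log_neg hv' h1; linarith
    have hsl : s ^ (2*l-1) ≠ 0 := pow_ne_zero _ hs.ne'
    have hsr : Real.sqrt (R (D₂ s)) = (R (D₂ s)) ^ ((1:ℝ)/2) := Real.sqrt_eq_rpow _
    rw [hsr]
    exact key2 _ _ _ _ _ _ hκpos.ne' hnl.ne' hsl
  -- assemble
  have goal1 : Tendsto
      (fun s : ℝ => (s - D₁ (R (D₂ s)) - (-a₂ * 2 ^ (-(l:ℝ)) * s ^ (2 * l - 1))) /
        s ^ (2 * l - 1)) F (nhds 0) := by
    have hlim := ((hmain1.neg).sub hD1term).add_const (a₂ * c')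
    rw [show (-(a₂ * c') - 0 + a₂ * c') = (0:ℝ) by ring] at hlim
    refine hlim.congr' ?_
    filter_upwards [hs0] with s hs
    rw [hc]
    have hsl : s ^ (2*l-1) ≠ 0 := pow_ne_zero _ hs.ne'
    field_simp
    ring
  refine ⟨goal1, -a₂ * 2 ^ (-(l:ℝ)), ?_, ?_⟩
  · exact mul_ne_zero (neg_ne_zero.2 ha₂) (Real.rpow_pos_of_pos two_pos _).ne'
  · have hlim := goal1.add_const (-a₂ * 2 ^ (-(l:ℝ)))
    rw [zero_add] at hlim
    refine hlim.congr' ?_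
    filter_upwards [hs0] with s hs
    have hsl : s ^ (2*l-1) ≠ 0 := pow_ne_zero _ hs.ne'
    field_simp
    ring
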